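/- Under the hypotheses of the composition proposition, the map x ↦ J_{F_{s(x)}}(x)^T ∇G_{t(F(x))}(F(x)) is a selection derivative of G ∘ F: it equals the gradient of the active C^1 piece G_j ∘ F_i at each point, where (i,j) = (s(x), t(F(x))). -/

import Mathlib

/-- Chain rule for selection derivatives: the map
`x ↦ J_{F_{s(x)}}(x)ᵀ ∇G_{t(F(x))}(F(x))` is a selection derivative of `G ∘ F`,
i.e. it equals the gradient of the active `C¹` piece `G_{t(F(x))} ∘ F_{s(x)}` at each
point. -/
theorem selection_chain_rule {p₁ p₂ m l : ℕ}
    (F : EuclideanSpace ℝ (Fin p₁) → EuclideanSpace ℝ (Fin p₂)) (hF : Continuous F)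
    (G : EuclideanSpace ℝ (Fin p₂) → ℝ) (hG : Continuous G)
    (Fs : Fin m → EuclideanSpace ℝ (Fin p₁) → EuclideanSpace ℝ (Fin p₂))
    (hFs : ∀ i, ContDiff ℝ 1 (Fs i))
    (s : EuclideanSpace ℝ (Fin p₁) → Fin m)
    (hFsel : ∀ x, F x = Fs (s x) x)
    (Gs : Fin l → EuclideanSpace ℝ (Fin p₂) → ℝ)
    (hGs : ∀ j, ContDiff ℝ 1 (Gs j))
    (t : EuclideanSpace ℝ (Fin p₂) → Fin l)
    (hGsel : ∀ y, G y = Gs (t y) y) :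
    ∀ x, gradient (fun y => Gs (t (F x)) (Fs (s x) y)) x
      = ContinuousLinearMap.adjoint (fderiv ℝ (Fs (s x)) x)
          (gradient (Gs (t (F x))) (F x)) := by
  intro x
  set i := s x
  set j := t (F x)
  have hdF : DifferentiableAt ℝ (Fs i) x := (hFs i).differentiable one_ne_zero x
  have hdG : DifferentiableAt ℝ (Gs j) (Fs i x) := (hGs j).differentiable one_ne_zero _
  have hfd : fderiv ℝ (fun y => Gs j (Fs i y)) x
      = (fderiv ℝ (Gs j) (Fs i x)).comp (fderiv ℝ (Fs i) x) :=
    fderiv_comp x hdG hdF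
  apply ext_inner_right ℝ
  intro v
  rw [gradient, gradient, ContinuousLinearMap.adjoint_inner_left,
    InnerProductSpace.toDual_symm_apply, InnerProductSpace.toDual_symm_apply, hfd, hFsel x]
  rfl
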